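/- Fix δ > 0 and x₀ > 0. Let (x,y) be an admissible pair: y : [0,∞) → (0,∞) is Lebesgue measurable and locally bounded, and x : [0,∞) → ℝ is locally absolutely continuous with x(0) = x₀ and x'(t) = x(t)(1−x(t)) − y(t)x(t) for a.e. t ≥ 0 (then x(t) > 0 and x(t) ≤ x_max := max(x₀,1) for all t). Set ω(T) = ((1+δ)·x_max/δ)·e^{−δT}. Then for all 0 ≤ T < T′ such that t ↦ e^{−δt}(ln x(t) + ln y(t)) is integrable on [T,T′], one has ∫_T^{T′} e^{−δt}( ln x(t) + ln y(t) ) dt < ω(T). -/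

import Mathlib

open MeasureTheory Set

namespace P1TailAux

variable {x₀ : ℝ} {x y : ℝ → ℝ}

lemma contOn_of_integrable (b : ℝ) (hb : 0 ≤ b)
    (hxeq : ∀ t : ℝ, 0 ≤ t → x t = x₀ + ∫ s in (0:ℝ)..t, (x s * (1 - x s) - y s * x s))
    (hint : IntervalIntegrable (fun s => x s * (1 - x s) - y s * x s) volume 0 b) :
    ContinuousOn x (Icc 0 b) := by
  have h0 : (0:ℝ) ∈ uIcc (0:ℝ) b := left_mem_uIcc
  have h1 := intervalIntegral.continuousOn_primitive_interval' hint h0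
  rw [uIcc_of_le hb] at h1
  exact (continuousOn_const.add h1).congr fun t ht => hxeq t ht.1

lemma le_max_of_integrable (b : ℝ) (hb : 0 ≤ b) (hx₀ : 0 < x₀)
    (hy_pos : ∀ t : ℝ, 0 ≤ t → 0 < y t)
    (hx0 : x 0 = x₀)
    (hxeq : ∀ t : ℝ, 0 ≤ t → x t = x₀ + ∫ s in (0:ℝ)..t, (x s * (1 - x s) - y s * x s))
    (hint : IntervalIntegrable (fun s => x s * (1 - x s) - y s * x s) volume 0 b)
    (hc : ContinuousOn x (Icc 0 b)) :
    ∀ t ∈ Icc (0:ℝ) b, x t ≤ max x₀ 1 := by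
  set M := max x₀ 1 with hM
  by_contra hcon
  push_neg at hcon
  obtain ⟨t, ht, hxt⟩ := hcon
  set A : Set ℝ := Icc 0 t ∩ x ⁻¹' (Iic M) with hA
  have hAclosed : IsClosed A :=
    (hc.mono (Icc_subset_Icc_right ht.2)).preimage_isClosed_of_isClosed isClosed_Icc isClosed_Iic
  have h0A : (0:ℝ) ∈ A := ⟨⟨le_refl 0, ht.1⟩, by simp [hx0, hM, le_max_left]⟩
  have hAne : A.Nonempty := ⟨0, h0A⟩
  have hAbdd : BddAbove A := ⟨t, fun s hs => hs.1.2⟩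
  set t₁ := sSup A with ht₁
  have ht₁A : t₁ ∈ A := hAclosed.csSup_mem hAne hAbdd
  have ht₁0 : 0 ≤ t₁ := ht₁A.1.1
  have ht₁t : t₁ ≤ t := ht₁A.1.2
  have hxt₁ : x t₁ ≤ M := ht₁A.2
  have ht₁lt : t₁ < t := lt_of_le_of_ne ht₁t (fun heq => absurd hxt₁ (by rw [heq]; exact not_le.2 hxt))
  have hsubt : IntervalIntegrable (fun s => x s * (1 - x s) - y s * x s) volume 0 t :=
    hint.mono_set (by rw [uIcc_of_le ht.1, uIcc_of_le hb]; exact Icc_subset_Icc_right ht.2)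
  have hsubt₁ : IntervalIntegrable (fun s => x s * (1 - x s) - y s * x s) volume 0 t₁ :=
    hint.mono_set (by
      rw [uIcc_of_le ht₁0, uIcc_of_le hb]
      exact Icc_subset_Icc_right (ht₁t.trans ht.2))
  have hsub := intervalIntegral.integral_interval_sub_left hsubt hsubt₁
  have hd : x t - x t₁ = ∫ s in t₁..t, (x s * (1 - x s) - y s * x s) := by
    rw [hxeq t ht.1, hxeq t₁ ht₁0, ← hsub]; ring
  have hneg : (∫ s in t₁..t, (x s * (1 - x s) - y s * x s)) ≤ 0 := by
    rw [intervalIntegral.integral_of_le ht₁lt.le]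
    apply setIntegral_nonpos measurableSet_Ioc
    intro s hs
    have hs0 : 0 ≤ s := le_trans ht₁0 hs.1.le
    have hys : 0 < y s := hy_pos s hs0
    have hxs : M < x s := by
      by_contra hle
      push_neg at hle
      have hmem : s ∈ A := ⟨⟨hs0, hs.2⟩, hle⟩
      exact absurd (le_csSup hAbdd hmem) (not_le.2 hs.1)
    have hx1 : 1 ≤ x s := le_trans (le_max_right x₀ 1) hxs.le
    nlinarith [mul_nonneg (show (0:ℝ) ≤ x s by linarith) (show (0:ℝ) ≤ x s - 1 by linarith),
      mul_pos hys (show (0:ℝ) < x s by linarith)]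
  linarith

lemma pos_of_integrable (b : ℝ) (hb : 0 ≤ b) (hx₀ : 0 < x₀)
    (hy_loc : ∀ T : ℝ, 0 < T → ∃ C : ℝ, ∀ t ∈ Set.Icc (0:ℝ) T, |y t| ≤ C)
    (hx0 : x 0 = x₀)
    (hxeq : ∀ t : ℝ, 0 ≤ t → x t = x₀ + ∫ s in (0:ℝ)..t, (x s * (1 - x s) - y s * x s))
    (hint : IntervalIntegrable (fun s => x s * (1 - x s) - y s * x s) volume 0 b)
    (hc : ContinuousOn x (Icc 0 b)) :
    ∀ t ∈ Icc (0:ℝ) b, 0 < x t := by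
  by_contra hcon
  push_neg at hcon
  obtain ⟨t, ht, hxt⟩ := hcon
  set Z : Set ℝ := Icc 0 b ∩ x ⁻¹' (Iic 0) with hZ
  have hZclosed : IsClosed Z :=
    hc.preimage_isClosed_of_isClosed isClosed_Icc isClosed_Iic
  have hZne : Z.Nonempty := ⟨t, ⟨ht, hxt⟩⟩
  have hZbdd : BddBelow Z := ⟨0, fun s hs => hs.1.1⟩
  set t₂ := sInf Z with ht₂def
  have ht₂Z : t₂ ∈ Z := hZclosed.csInf_mem hZne hZbdd
  have ht₂mem : t₂ ∈ Icc (0:ℝ) b := ht₂Z.1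
  have hxt₂ : x t₂ ≤ 0 := ht₂Z.2
  have hpos_lt : ∀ s, 0 ≤ s → s ≤ b → s < t₂ → 0 < x s := by
    intro s h0 hsb hst
    by_contra hle
    push_neg at hle
    exact absurd (csInf_le hZbdd ⟨⟨h0, hsb⟩, hle⟩) (not_le.2 hst)
  have ht₂pos : 0 < t₂ := by
    rcases ht₂mem.1.eq_or_lt with h | h
    · exfalso; rw [← h, hx0] at hxt₂; linarith
    · exact h
  have hge : 0 ≤ x t₂ := by
    have hW : IsClosed (Icc 0 b ∩ x ⁻¹' (Ici 0)) :=
      hc.preimage_isClosed_of_isClosed isClosed_Icc isClosed_Ici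
    have hsubset : Ico 0 t₂ ⊆ Icc 0 b ∩ x ⁻¹' (Ici 0) := by
      intro s hs
      have hsb : s ≤ b := le_trans hs.2.le ht₂mem.2
      exact ⟨⟨hs.1, hsb⟩, (hpos_lt s hs.1 hsb hs.2).le⟩
    have hcl : Icc 0 t₂ ⊆ Icc 0 b ∩ x ⁻¹' (Ici 0) := by
      rw [← closure_Ico (ne_of_lt ht₂pos)]
      exact closure_minimal hsubset hW
    exact (hcl (right_mem_Icc.2 ht₂pos.le)).2
  have hxt₂0 : x t₂ = 0 := le_antisymm hxt₂ hge
  obtain ⟨Cx, hCx⟩ := isCompact_Icc.exists_bound_of_continuousOn hc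
  obtain ⟨Cy, hCy⟩ := hy_loc b (lt_of_lt_of_le ht₂pos ht₂mem.2)
  have hCx0 : 0 ≤ Cx := le_trans (norm_nonneg _) (hCx 0 ⟨le_refl 0, hb⟩)
  have hCy0 : 0 ≤ Cy := le_trans (abs_nonneg _) (hCy 0 ⟨le_refl 0, hb⟩)
  set K := 1 + Cx + Cy with hK
  have hK1 : (1:ℝ) ≤ K := by simp only [hK]; linarith
  have hKpos : (0:ℝ) < K := by linarith
  set h := min t₂ (1/(2*K)) with hh
  have hhpos : 0 < h := lt_min ht₂pos (by positivity)
  have hht₂ : h ≤ t₂ := min_le_left _ _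
  have hI : Icc (t₂ - h) t₂ ⊆ Icc 0 b := Icc_subset_Icc (by linarith) ht₂mem.2
  obtain ⟨ts, htsI, htsmax⟩ :=
    isCompact_Icc.exists_isMaxOn (nonempty_Icc.2 (by linarith)) (hc.mono hI)
  have hM₀_ge : ∀ s ∈ Icc (t₂ - h) t₂, x s ≤ x ts := fun s hs => htsmax hs
  have hM₀pos : 0 < x ts := by
    have hmem : t₂ - h ∈ Icc (t₂ - h) t₂ := ⟨le_refl _, by linarith⟩
    have hpos' : 0 < x (t₂ - h) := by
      rcases (show (0:ℝ) ≤ t₂ - h by linarith).eq_or_lt with h0 | h0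
      · rw [← h0, hx0]; exact hx₀
      · exact hpos_lt _ h0.le (by linarith [ht₂mem.2]) (by linarith)
    exact lt_of_lt_of_le hpos' (hM₀_ge _ hmem)
  have htslt : ts < t₂ := by
    rcases lt_or_eq_of_le htsI.2 with h' | h'
    · exact h'
    · exfalso; rw [h', hxt₂0] at hM₀pos; linarith
  have hts0 : 0 ≤ ts := le_trans (by linarith) htsI.1
  have hint_ts : IntervalIntegrable (fun s => x s * (1 - x s) - y s * x s) volume 0 ts :=
    hint.mono_set (by
      rw [uIcc_of_le hts0, uIcc_of_le hb]
      exact Icc_subset_Icc_right (le_trans htslt.le ht₂mem.2))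
  have hint_t₂ : IntervalIntegrable (fun s => x s * (1 - x s) - y s * x s) volume 0 t₂ :=
    hint.mono_set (by
      rw [uIcc_of_le ht₂mem.1, uIcc_of_le hb]
      exact Icc_subset_Icc_right ht₂mem.2)
  have hint_sub : IntervalIntegrable (fun s => x s * (1 - x s) - y s * x s) volume ts t₂ :=
    hint.mono_set (by
      rw [uIcc_of_le htslt.le, uIcc_of_le hb]
      exact Icc_subset_Icc hts0 ht₂mem.2)
  have hsub := intervalIntegral.integral_interval_sub_left hint_t₂ hint_ts
  have hdiff : x t₂ - x ts = ∫ s in ts..t₂, (x s * (1 - x s) - y s * x s) := by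
    rw [hxeq t₂ ht₂mem.1, hxeq ts hts0, ← hsub]; ring
  have habs : x ts ≤ ∫ s in ts..t₂, |x s * (1 - x s) - y s * x s| := by
    have h1 : x ts = -(∫ s in ts..t₂, (x s * (1 - x s) - y s * x s)) := by
      rw [← hdiff, hxt₂0]; ring
    rw [h1]
    exact le_trans (neg_le_abs _)
      (intervalIntegral.abs_integral_le_integral_abs htslt.le)
  have hptwise : ∀ s ∈ Icc ts t₂, |x s * (1 - x s) - y s * x s| ≤ K * x ts := by
    intro s hs
    have hsI : s ∈ Icc (t₂ - h) t₂ := ⟨le_trans htsI.1 hs.1, hs.2⟩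
    have hs0 : 0 ≤ s := le_trans hts0 hs.1
    have hsb : s ≤ b := le_trans hs.2 ht₂mem.2
    have hxs_nonneg : 0 ≤ x s := by
      rcases hs.2.eq_or_lt with h' | h'
      · rw [h', hxt₂0]
      · exact (hpos_lt s hs0 hsb h').le
    have hxs_le : x s ≤ x ts := hM₀_ge s hsI
    have hxCx : |x s| ≤ Cx := by
      have := hCx s ⟨hs0, hsb⟩
      rwa [Real.norm_eq_abs] at this
    have hyCy : |y s| ≤ Cy := hCy s ⟨hs0, hsb⟩
    have h1xy : |1 - x s - y s| ≤ K := by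
      rw [abs_le] at hxCx hyCy ⊢
      constructor <;> simp only [hK] <;> [linarith [hxCx.1, hxCx.2, hyCy.1, hyCy.2];
        linarith [hxCx.1, hxCx.2, hyCy.1, hyCy.2]]
    have hfac : x s * (1 - x s) - y s * x s = x s * (1 - x s - y s) := by ring
    rw [hfac, abs_mul]
    calc |x s| * |1 - x s - y s| ≤ x ts * K := by
          apply mul_le_mul _ h1xy (abs_nonneg _) hM₀pos.le
          rwa [abs_of_nonneg hxs_nonneg]
      _ = K * x ts := by ring
  have hfinal : x ts ≤ K * x ts * (t₂ - ts) := by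
    calc x ts ≤ ∫ s in ts..t₂, |x s * (1 - x s) - y s * x s| := habs
      _ ≤ ∫ _s in ts..t₂, K * x ts :=
          intervalIntegral.integral_mono_on htslt.le hint_sub.abs
            intervalIntegrable_const hptwise
      _ = K * x ts * (t₂ - ts) := by
          rw [intervalIntegral.integral_const, smul_eq_mul]; ring
  have hts2 : t₂ - ts ≤ h := by have := htsI.1; linarith
  have hKh : K * (t₂ - ts) ≤ 1/2 := by
    calc K * (t₂ - ts) ≤ K * h := mul_le_mul_of_nonneg_left hts2 hKpos.le
      _ ≤ K * (1/(2*K)) := mul_le_mul_of_nonneg_left (min_le_right _ _) hKpos.le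
      _ = 1/2 := by field_simp
  nlinarith [mul_le_mul_of_nonneg_left hKh hM₀pos.le]

lemma int_all (hx₀ : 0 < x₀) (hy_meas : Measurable y)
    (hy_loc : ∀ T : ℝ, 0 < T → ∃ C : ℝ, ∀ t ∈ Set.Icc (0:ℝ) T, |y t| ≤ C)
    (hy_pos : ∀ t : ℝ, 0 ≤ t → 0 < y t)
    (hx0 : x 0 = x₀)
    (hxeq : ∀ t : ℝ, 0 ≤ t → x t = x₀ + ∫ s in (0:ℝ)..t, (x s * (1 - x s) - y s * x s)) :
    ∀ b : ℝ, 0 ≤ b → IntervalIntegrable (fun s => x s * (1 - x s) - y s * x s) volume 0 b := by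
  by_contra hcon
  push_neg at hcon
  obtain ⟨b₀, hb₀, hbad₀⟩ := hcon
  set Bad : Set ℝ := {b | 0 ≤ b ∧ ¬ IntervalIntegrable (fun s => x s * (1 - x s) - y s * x s) volume 0 b} with hBad
  have hne : Bad.Nonempty := ⟨b₀, hb₀, hbad₀⟩
  have hbdd : BddBelow Bad := ⟨0, fun b hb => hb.1⟩
  set σ := sInf Bad with hσdef
  have hσ0 : 0 ≤ σ := le_csInf hne fun b hb => hb.1
  have hlt : ∀ s : ℝ, 0 ≤ s → s < σ →
      IntervalIntegrable (fun s => x s * (1 - x s) - y s * x s) volume 0 s := by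
    intro s hs0 hsσ
    by_contra hbad
    exact absurd (csInf_le hbdd ⟨hs0, hbad⟩) (not_le.2 hsσ)
  have hgt : ∀ s : ℝ, σ < s →
      ¬ IntervalIntegrable (fun s => x s * (1 - x s) - y s * x s) volume 0 s := by
    intro s hs hintg
    obtain ⟨b, hbBad, hbs⟩ := exists_lt_of_csInf_lt hne hs
    exact hbBad.2 (hintg.mono_set (by
      rw [uIcc_of_le hbBad.1, uIcc_of_le (hσ0.trans hs.le)]
      exact Icc_subset_Icc_right hbs.le))
  set M := max x₀ 1 with hM
  have hMpos : (0:ℝ) < M := lt_of_lt_of_le one_pos (le_max_right _ _)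
  obtain ⟨C, hC⟩ := hy_loc (σ + 1) (by linarith)
  have hC0 : 0 ≤ C := le_trans (abs_nonneg _) (hC 0 ⟨le_refl 0, by linarith⟩)
  -- continuity and bounds of x on [0, σ)
  have hxcont : ContinuousOn x (Ico 0 σ) := by
    intro t htm
    obtain ⟨s, hts, hsσ⟩ := exists_between htm.2
    have hs0 : 0 ≤ s := le_trans htm.1 hts.le
    have hcs : ContinuousOn x (Icc 0 s) := contOn_of_integrable s hs0 hxeq (hlt s hs0 hsσ)
    refine (hcs t ⟨htm.1, hts.le⟩).mono_of_mem_nhdsWithin ?_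
    refine Filter.mem_of_superset (inter_mem_nhdsWithin (Ico 0 σ) (Iio_mem_nhds hts)) ?_
    rintro r ⟨hr1, hr2⟩
    exact ⟨hr1.1, le_of_lt hr2⟩
  have hxb : ∀ s ∈ Ico (0:ℝ) σ, 0 < x s ∧ x s ≤ M := by
    intro s hs
    have hintS := hlt s hs.1 hs.2
    have hcs := contOn_of_integrable s hs.1 hxeq hintS
    exact ⟨pos_of_integrable s hs.1 hx₀ hy_loc hx0 hxeq hintS hcs s (right_mem_Icc.2 hs.1),
      le_max_of_integrable s hs.1 hx₀ hy_pos hx0 hxeq hintS hcs s (right_mem_Icc.2 hs.1)⟩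
  -- integrability on [0, σ]
  have hxm : AEStronglyMeasurable x (volume.restrict (Ico 0 σ)) :=
    hxcont.aestronglyMeasurable measurableSet_Ico
  have hym : AEStronglyMeasurable y (volume.restrict (Ico 0 σ)) :=
    hy_meas.aestronglyMeasurable.restrict
  have hgm : AEStronglyMeasurable (fun s => x s * (1 - x s) - y s * x s)
      (volume.restrict (Ico 0 σ)) :=
    (hxm.mul (aestronglyMeasurable_const.sub hxm)).sub (hym.mul hxm)
  have hIco : IntegrableOn (fun s => x s * (1 - x s) - y s * x s) (Ico 0 σ) volume := by
    refine Integrable.mono' (g := fun _ => M * (1 + M) + C * M)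
      ((integrableOn_const_iff (C := M * (1 + M) + C * M)).2 (Or.inr measure_Ico_lt_top)) hgm ?_
    rw [ae_restrict_iff' measurableSet_Ico]
    refine Filter.Eventually.of_forall fun s hs => ?_
    obtain ⟨hxs_pos, hxs_le⟩ := hxb s hs
    have hys : |y s| ≤ C := hC s ⟨hs.1, by linarith [hs.2]⟩
    have hxabs : |x s| ≤ M := by rw [abs_of_pos hxs_pos]; exact hxs_le
    rw [Real.norm_eq_abs]
    calc |x s * (1 - x s) - y s * x s| ≤ |x s * (1 - x s)| + |y s * x s| := abs_sub _ _
      _ = |x s| * |1 - x s| + |y s| * |x s| := by rw [abs_mul, abs_mul]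
      _ ≤ M * (1 + M) + C * M := by
          have h1 : |1 - x s| ≤ 1 + M := by
            rw [abs_le] at hxabs ⊢
            constructor <;> linarith [hxabs.1, hxabs.2]
          have := abs_nonneg (x s)
          have := abs_nonneg (y s)
          have := abs_nonneg (1 - x s)
          nlinarith
  have hσint : IntervalIntegrable (fun s => x s * (1 - x s) - y s * x s) volume 0 σ := by
    rw [intervalIntegrable_iff_integrableOn_Ioc_of_le hσ0]
    exact hIco.congr_set_ae (Ioo_ae_eq_Ioc.symm.trans Ioo_ae_eq_Ico)
  -- x is junk beyond σ
  have hjunk : ∀ s : ℝ, σ < s → x s = x₀ := by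
    intro s hs
    rw [hxeq s (hσ0.trans hs.le), intervalIntegral.integral_undef (hgt s hs), add_zero]
  have htail : IntegrableOn (fun s => x s * (1 - x s) - y s * x s) (Ioc σ (σ+1)) volume := by
    have hnice : IntegrableOn (fun s => x₀ * (1 - x₀) - y s * x₀) (Ioc σ (σ+1)) volume := by
      refine Integrable.mono' (g := fun _ => |x₀ * (1 - x₀)| + C * |x₀|)
        ((integrableOn_const_iff (C := |x₀ * (1 - x₀)| + C * |x₀|)).2 (Or.inr measure_Ioc_lt_top))
        ((aestronglyMeasurable_const.sub
          ((hy_meas.mul_const x₀).aestronglyMeasurable.restrict))) ?_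
      rw [ae_restrict_iff' measurableSet_Ioc]
      refine Filter.Eventually.of_forall fun s hs => ?_
      have hys : |y s| ≤ C := hC s ⟨hσ0.trans hs.1.le, hs.2⟩
      rw [Real.norm_eq_abs]
      calc |x₀ * (1 - x₀) - y s * x₀| ≤ |x₀ * (1 - x₀)| + |y s * x₀| := abs_sub _ _
        _ ≤ |x₀ * (1 - x₀)| + C * |x₀| := by
            rw [abs_mul (y s) x₀]
            have := mul_le_mul_of_nonneg_right hys (abs_nonneg x₀)
            linarith
    refine hnice.congr_fun (fun s hs => ?_) measurableSet_Ioc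
    show x₀ * (1 - x₀) - y s * x₀ = x s * (1 - x s) - y s * x s
    rw [hjunk s hs.1]
  have hfull : IntervalIntegrable (fun s => x s * (1 - x s) - y s * x s) volume 0 (σ+1) :=
    hσint.trans ((intervalIntegrable_iff_integrableOn_Ioc_of_le (by linarith : σ ≤ σ + 1)).2 htail)
  exact hgt (σ+1) (by linarith) hfull

lemma exp_int (δ : ℝ) (hδ : 0 < δ) (a b : ℝ) (hab : a ≤ b) :
    ∫ t in Ioc a b, Real.exp (-δ * t) = (Real.exp (-δ * a) - Real.exp (-δ * b)) / δ := by
  rw [← intervalIntegral.integral_of_le hab,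
    intervalIntegral.integral_comp_mul_left (fun u => Real.exp u) (neg_ne_zero.2 hδ.ne'),
    integral_exp, smul_eq_mul]
  have hδ' : δ ≠ 0 := hδ.ne'
  field_simp
  rw [neg_sub]

lemma fubini_exp (g : ℝ → ℝ) (δ T T' : ℝ) (hδ : 0 < δ) (hTT' : T ≤ T')
    (hg : IntegrableOn g (Ioc T T') volume) :
    ∫ s in Ioc T T', Real.exp (-δ * s) * (∫ t in Ioc T s, g t) =
      ∫ t in Ioc T T', ((Real.exp (-δ * t) - Real.exp (-δ * T')) / δ) * g t := by
  set μ := volume.restrict (Ioc T T') with hμ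
  have hEcont : Continuous (fun s : ℝ => Real.exp (-δ * s)) :=
    Real.continuous_exp.comp (continuous_const.mul continuous_id)
  set f : ℝ → ℝ → ℝ := fun s t => if t ≤ s then Real.exp (-δ * s) * g t else 0 with hf
  have hgm : AEStronglyMeasurable g μ := hg.aestronglyMeasurable
  have hEint : Integrable (fun s : ℝ => Real.exp (-δ * s)) μ := hEcont.integrableOn_Ioc
  have hmeasS : MeasurableSet {p : ℝ × ℝ | p.2 ≤ p.1} :=
    measurableSet_le measurable_snd measurable_fst
  have huncurry : Function.uncurry f =
      Set.indicator {p : ℝ × ℝ | p.2 ≤ p.1} (fun p => Real.exp (-δ * p.1) * g p.2) := by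
    funext p
    by_cases hp : p.2 ≤ p.1
    · simp only [Function.uncurry, hf,
        Set.indicator_of_mem (show p ∈ {p : ℝ × ℝ | p.2 ≤ p.1} from hp), if_pos hp]
    · simp only [Function.uncurry, hf,
        Set.indicator_of_notMem (show p ∉ {p : ℝ × ℝ | p.2 ≤ p.1} from hp), if_neg hp]
  have hfm : AEStronglyMeasurable (Function.uncurry f) (μ.prod μ) := by
    rw [huncurry]
    exact (((hEcont.comp continuous_fst).aestronglyMeasurable).mul hgm.comp_snd).indicator hmeasS
  have hfint : Integrable (Function.uncurry f) (μ.prod μ) := by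
    have hb : Integrable (fun p : ℝ × ℝ => Real.exp (-δ * p.1) * |g p.2|) (μ.prod μ) :=
      Integrable.mul_prod hEint hg.abs
    refine hb.mono' hfm (Filter.Eventually.of_forall fun p => ?_)
    by_cases hp : p.2 ≤ p.1
    · simp only [Function.uncurry, hf, if_pos hp, Real.norm_eq_abs, abs_mul,
        abs_of_pos (Real.exp_pos _)]
      exact le_refl _
    · simp only [Function.uncurry, hf, if_neg hp, Real.norm_eq_abs, abs_zero]
      positivity
  have hswap := integral_integral_swap hfint
  have hL : (∫ s, (∫ t, f s t ∂μ) ∂μ) =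
      ∫ s in Ioc T T', Real.exp (-δ * s) * (∫ t in Ioc T s, g t) := by
    rw [hμ]
    apply setIntegral_congr_fun measurableSet_Ioc
    intro s hs
    show (∫ t in Ioc T T', f s t) = Real.exp (-δ * s) * ∫ t in Ioc T s, g t
    have h1 : (∫ t in Ioc T T', f s t) =
        ∫ t in Ioc T T', (Ioc T s).indicator (fun t => Real.exp (-δ * s) * g t) t := by
      apply setIntegral_congr_fun measurableSet_Ioc
      intro t ht
      by_cases hts : t ≤ s
      · rw [Set.indicator_of_mem (show t ∈ Ioc T s from ⟨ht.1, hts⟩)]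
        simp only [hf, if_pos hts]
      · rw [Set.indicator_of_notMem (show t ∉ Ioc T s from fun hmem => hts hmem.2)]
        simp only [hf, if_neg hts]
    rw [h1, setIntegral_indicator measurableSet_Ioc,
      inter_eq_self_of_subset_right (Ioc_subset_Ioc_right hs.2), integral_const_mul]
  have hR : (∫ t, (∫ s, f s t ∂μ) ∂μ) =
      ∫ t in Ioc T T', ((Real.exp (-δ * t) - Real.exp (-δ * T')) / δ) * g t := by
    rw [hμ]
    apply setIntegral_congr_fun measurableSet_Ioc
    intro t ht
    show (∫ s in Ioc T T', f s t) = ((Real.exp (-δ * t) - Real.exp (-δ * T')) / δ) * g t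
    have h1 : (∫ s in Ioc T T', f s t) =
        ∫ s in Ioc T T', (Icc t T').indicator (fun s => Real.exp (-δ * s) * g t) s := by
      apply setIntegral_congr_fun measurableSet_Ioc
      intro s hs
      by_cases hts : t ≤ s
      · rw [Set.indicator_of_mem (show s ∈ Icc t T' from ⟨hts, hs.2⟩)]
        simp only [hf, if_pos hts]
      · rw [Set.indicator_of_notMem (show s ∉ Icc t T' from fun hmem => hts hmem.1)]
        simp only [hf, if_neg hts]
    have h2 : Ioc T T' ∩ Icc t T' = Icc t T' := by
      apply inter_eq_self_of_subset_right
      intro s hs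
      exact ⟨lt_of_lt_of_le ht.1 hs.1, hs.2⟩
    have h3 : ∫ s in Icc t T', Real.exp (-δ * s) =
        (Real.exp (-δ * t) - Real.exp (-δ * T')) / δ := by
      rw [integral_Icc_eq_integral_Ioc]
      exact exp_int δ hδ t T' ht.2
    rw [h1, setIntegral_indicator measurableSet_Icc, h2, integral_mul_const, h3]
  rw [← hL, ← hR]
  exact hswap

end P1TailAux


open MeasureTheory

/-- An admissible pair for problem (P1): `y` is a measurable, locally bounded,
positive control, and `x` is the (locally absolutely continuous) trajectory of the
logistic-harvesting dynamics `x' = x(1−x) − y·x`, `x 0 = x₀`, encoded by the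
integral equation. -/
def P1Admissible (x₀ : ℝ) (x y : ℝ → ℝ) : Prop :=
  Measurable y ∧
  (∀ T : ℝ, 0 < T → ∃ C : ℝ, ∀ t ∈ Set.Icc (0:ℝ) T, |y t| ≤ C) ∧
  (∀ t : ℝ, 0 ≤ t → 0 < y t) ∧
  x 0 = x₀ ∧
  (∀ t : ℝ, 0 ≤ t → x t = x₀ + ∫ s in (0:ℝ)..t, (x s * (1 - x s) - y s * x s))

/-- Uniform tail estimate for the discounted logarithmic utility:
`∫_T^{T'} e^{−δt}(ln x + ln y) dt < ω(T)` where
`ω(T) = ((1+δ)·max(x₀,1)/δ)·e^{−δT}`. -/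
theorem discounted_utility_tail_estimate (δ x₀ : ℝ) (hδ : 0 < δ) (hx₀ : 0 < x₀)
    (x y : ℝ → ℝ) (hadm : P1Admissible x₀ x y)
    (T T' : ℝ) (hT : 0 ≤ T) (hTT' : T < T')
    (hint : IntervalIntegrable
      (fun t => Real.exp (-δ * t) * (Real.log (x t) + Real.log (y t))) volume T T') :
    (∫ t in T..T', Real.exp (-δ * t) * (Real.log (x t) + Real.log (y t)))
      < ((1 + δ) * max x₀ 1 / δ) * Real.exp (-δ * T) := by
  obtain ⟨hy_meas, hy_loc, hy_pos, hx0, hxeq⟩ := hadm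
  have hT'0 : 0 ≤ T' := hT.trans hTT'.le
  set M := max x₀ 1 with hM
  have hM1 : (1:ℝ) ≤ M := le_max_right _ _
  have hMpos : 0 < M := lt_of_lt_of_le one_pos hM1
  have hglob := P1TailAux.int_all hx₀ hy_meas hy_loc hy_pos hx0 hxeq
  have hintT' := hglob T' hT'0
  have hc : ContinuousOn x (Icc 0 T') := P1TailAux.contOn_of_integrable T' hT'0 hxeq hintT'
  have hpos : ∀ t ∈ Icc (0:ℝ) T', 0 < x t :=
    P1TailAux.pos_of_integrable T' hT'0 hx₀ hy_loc hx0 hxeq hintT' hc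
  have hle : ∀ t ∈ Icc (0:ℝ) T', x t ≤ M :=
    P1TailAux.le_max_of_integrable T' hT'0 hx₀ hy_pos hx0 hxeq hintT' hc
  have hg_int : IntervalIntegrable (fun s => x s * (1 - x s) - y s * x s) volume T T' :=
    hintT'.mono_set (by rw [uIcc_of_le hTT'.le, uIcc_of_le hT'0]; exact Icc_subset_Icc_left hT)
  have hgS : IntegrableOn (fun s => x s * (1 - x s) - y s * x s) (Ioc T T') volume :=
    (intervalIntegrable_iff_integrableOn_Ioc_of_le hTT'.le).1 hg_int
  have hxdiff : ∀ s, T ≤ s → x s - x T = ∫ t in Ioc T s, (x t * (1 - x t) - y t * x t) := by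
    intro s hTs
    rw [← intervalIntegral.integral_of_le hTs,
      ← intervalIntegral.integral_interval_sub_left (hglob s (hT.trans hTs)) (hglob T hT),
      hxeq s (hT.trans hTs), hxeq T hT]
    ring
  have hxcT : ContinuousOn x (Icc T T') := hc.mono (Icc_subset_Icc_left hT)
  have hEc : Continuous (fun t : ℝ => Real.exp (-δ * t)) :=
    Real.continuous_exp.comp (continuous_const.mul continuous_id)
  have hInt1 : IntegrableOn (fun t => Real.exp (-δ * t) * (x t * (1 - x t))) (Ioc T T') volume := by
    have hco : ContinuousOn (fun t => Real.exp (-δ * t) * (x t * (1 - x t))) (Icc T T') :=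
      (hEc.continuousOn).mul (hxcT.mul (continuousOn_const.sub hxcT))
    exact (hco.integrableOn_Icc).mono_set Ioc_subset_Icc_self
  have hInt2 : IntegrableOn (fun t => Real.exp (-δ * t) * (x t * (1 - x t) - y t * x t))
      (Ioc T T') volume :=
    (intervalIntegrable_iff_integrableOn_Ioc_of_le hTT'.le).1
      (hg_int.continuousOn_mul hEc.continuousOn)
  have hfunid : (fun t => Real.exp (-δ * t) * (x t * y t)) =
      fun t => Real.exp (-δ * t) * (x t * (1 - x t)) -
        Real.exp (-δ * t) * (x t * (1 - x t) - y t * x t) := by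
    funext t; ring
  have hInt3 : IntegrableOn (fun t => Real.exp (-δ * t) * (x t * y t)) (Ioc T T') volume := by
    rw [hfunid]; exact hInt1.sub hInt2
  have hIntL : IntegrableOn (fun t => Real.exp (-δ * t) * (Real.log (x t) + Real.log (y t)))
      (Ioc T T') volume :=
    (intervalIntegrable_iff_integrableOn_Ioc_of_le hTT'.le).1 hint
  have hmono1 : (∫ t in Ioc T T', Real.exp (-δ * t) * (Real.log (x t) + Real.log (y t)))
      ≤ ∫ t in Ioc T T', Real.exp (-δ * t) * (x t * y t) := by
    apply setIntegral_mono_on hIntL hInt3 measurableSet_Ioc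
    intro t ht
    have ht0 : 0 ≤ t := hT.trans ht.1.le
    have hxt : 0 < x t := hpos t ⟨ht0, ht.2⟩
    have hyt : 0 < y t := hy_pos t ht0
    have hlog : Real.log (x t) + Real.log (y t) ≤ x t * y t := by
      rw [← Real.log_mul hxt.ne' hyt.ne']
      have := Real.log_le_sub_one_of_pos (mul_pos hxt hyt)
      linarith
    exact mul_le_mul_of_nonneg_left hlog (Real.exp_pos _).le
  have hfub := P1TailAux.fubini_exp (fun s => x s * (1 - x s) - y s * x s) δ T T' hδ hTT'.le hgS
  have hL' : (∫ s in Ioc T T', Real.exp (-δ * s) * (x s - x T)) =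
      ∫ t in Ioc T T', ((Real.exp (-δ * t) - Real.exp (-δ * T')) / δ) *
        (x t * (1 - x t) - y t * x t) := by
    rw [← hfub]
    apply setIntegral_congr_fun measurableSet_Ioc
    intro s hs
    show Real.exp (-δ * s) * (x s - x T) = _
    rw [hxdiff s hs.1.le]
  have hIntEx : IntegrableOn (fun s => Real.exp (-δ * s) * (x s - x T)) (Ioc T T') volume := by
    have hco : ContinuousOn (fun s => Real.exp (-δ * s) * (x s - x T)) (Icc T T') :=
      hEc.continuousOn.mul (hxcT.sub continuousOn_const)
    exact hco.integrableOn_Icc.mono_set Ioc_subset_Icc_self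
  have hIntETg : IntegrableOn
      (fun t => Real.exp (-δ * T') * (x t * (1 - x t) - y t * x t)) (Ioc T T') volume :=
    hgS.const_mul _
  have hSg : (∫ t in Ioc T T', (x t * (1 - x t) - y t * x t)) = x T' - x T :=
    (hxdiff T' hTT'.le).symm
  have hδ' : δ ≠ 0 := hδ.ne'
  have h5 : (∫ t in Ioc T T', ((Real.exp (-δ * t) - Real.exp (-δ * T')) / δ) *
        (x t * (1 - x t) - y t * x t)) =
      (1/δ) * ((∫ t in Ioc T T', Real.exp (-δ * t) * (x t * (1 - x t) - y t * x t))
        - Real.exp (-δ * T') * (x T' - x T)) := by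
    have hfn : (fun t => ((Real.exp (-δ * t) - Real.exp (-δ * T')) / δ) *
        (x t * (1 - x t) - y t * x t)) =
        fun t => (1/δ) * (Real.exp (-δ * t) * (x t * (1 - x t) - y t * x t)
          - Real.exp (-δ * T') * (x t * (1 - x t) - y t * x t)) := by
      funext t
      field_simp
    rw [hfn, integral_const_mul, integral_sub hInt2 hIntETg, integral_const_mul, hSg]
  have hEg : (∫ t in Ioc T T', Real.exp (-δ * t) * (x t * (1 - x t) - y t * x t)) =
      δ * (∫ s in Ioc T T', Real.exp (-δ * s) * (x s - x T))
        + Real.exp (-δ * T') * (x T' - x T) := by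
    rw [hL', h5]
    field_simp
    ring
  have hcomb : (∫ t in Ioc T T', Real.exp (-δ * t) * (x t * (1 - x t)))
      - δ * (∫ s in Ioc T T', Real.exp (-δ * s) * (x s - x T)) =
      ∫ t in Ioc T T', (Real.exp (-δ * t) * (x t * (1 - x t))
        - δ * (Real.exp (-δ * t) * (x t - x T))) := by
    rw [integral_sub hInt1 (hIntEx.const_mul δ), integral_const_mul]
  have hIntgoal2 : IntegrableOn (fun t => (1+δ) * M * Real.exp (-δ * t)) (Ioc T T') volume :=
    (hEc.integrableOn_Ioc).const_mul _
  have hmono2 : (∫ t in Ioc T T', (Real.exp (-δ * t) * (x t * (1 - x t))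
        - δ * (Real.exp (-δ * t) * (x t - x T))))
      ≤ ∫ t in Ioc T T', (1+δ) * M * Real.exp (-δ * t) := by
    apply setIntegral_mono_on (hInt1.sub (hIntEx.const_mul δ)) hIntgoal2 measurableSet_Ioc
    intro t ht
    have ht0 : 0 ≤ t := hT.trans ht.1.le
    have hxt : 0 < x t := hpos t ⟨ht0, ht.2⟩
    have hxtM : x t ≤ M := hle t ⟨ht0, ht.2⟩
    have hxT : 0 < x T := hpos T ⟨hT, hTT'.le⟩
    have hxTM : x T ≤ M := hle T ⟨hT, hTT'.le⟩
    have hE : 0 < Real.exp (-δ * t) := Real.exp_pos _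
    have hinner : x t * (1 - x t) - δ * (x t - x T) ≤ (1+δ) * M := by
      nlinarith [mul_self_nonneg (x t), mul_pos hδ hxt,
        mul_le_mul_of_nonneg_left hxTM hδ.le]
    calc Real.exp (-δ * t) * (x t * (1 - x t)) - δ * (Real.exp (-δ * t) * (x t - x T))
        = Real.exp (-δ * t) * (x t * (1 - x t) - δ * (x t - x T)) := by ring
      _ ≤ Real.exp (-δ * t) * ((1+δ) * M) := mul_le_mul_of_nonneg_left hinner hE.le
      _ = (1+δ) * M * Real.exp (-δ * t) := by ring
  have hexpint : (∫ t in Ioc T T', Real.exp (-δ * t)) =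
      (Real.exp (-δ * T) - Real.exp (-δ * T')) / δ := P1TailAux.exp_int δ hδ T T' hTT'.le
  have hQpos : 0 < Real.exp (-δ * T') := Real.exp_pos _
  have hxT'pos : 0 < x T' := hpos T' ⟨hT'0, le_rfl⟩
  have hxTM' : x T ≤ M := hle T ⟨hT, hTT'.le⟩
  rw [intervalIntegral.integral_of_le hTT'.le]
  calc (∫ t in Ioc T T', Real.exp (-δ * t) * (Real.log (x t) + Real.log (y t)))
      ≤ ∫ t in Ioc T T', Real.exp (-δ * t) * (x t * y t) := hmono1
    _ = (∫ t in Ioc T T', Real.exp (-δ * t) * (x t * (1 - x t)))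
        - (∫ t in Ioc T T', Real.exp (-δ * t) * (x t * (1 - x t) - y t * x t)) := by
        rw [hfunid, integral_sub hInt1 hInt2]
    _ = ((∫ t in Ioc T T', Real.exp (-δ * t) * (x t * (1 - x t)))
        - δ * (∫ s in Ioc T T', Real.exp (-δ * s) * (x s - x T)))
        - Real.exp (-δ * T') * (x T' - x T) := by rw [hEg]; ring
    _ = (∫ t in Ioc T T', (Real.exp (-δ * t) * (x t * (1 - x t))
        - δ * (Real.exp (-δ * t) * (x t - x T))))
        - Real.exp (-δ * T') * (x T' - x T) := by rw [← hcomb]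
    _ ≤ ((1+δ) * M * ((Real.exp (-δ * T) - Real.exp (-δ * T')) / δ))
        - Real.exp (-δ * T') * (x T' - x T) := by
        have hval : (∫ t in Ioc T T', (1+δ) * M * Real.exp (-δ * t))
            = (1+δ) * M * ((Real.exp (-δ * T) - Real.exp (-δ * T')) / δ) := by
          rw [integral_const_mul, hexpint]
        linarith [hmono2]
    _ < ((1 + δ) * M / δ) * Real.exp (-δ * T) := by
        have h2 : - (Real.exp (-δ * T') * (x T' - x T)) ≤ Real.exp (-δ * T') * M := by
          nlinarith
        have expand : (1+δ) * M * ((Real.exp (-δ * T) - Real.exp (-δ * T')) / δ)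
            = ((1 + δ) * M / δ) * Real.exp (-δ * T)
              - ((1 + δ) * M / δ) * Real.exp (-δ * T') := by
          field_simp
        have key : ((1 + δ) * M / δ) * Real.exp (-δ * T')
            = M * Real.exp (-δ * T') + M * Real.exp (-δ * T') / δ := by
          field_simp
          ring
        have hposq : 0 < M * Real.exp (-δ * T') / δ := by positivity
        linarith
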